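/- Let ω = (−1 + i√3)/2 and let Q be an n×n cube root Seidel matrix in standard form satisfying Q² = (n−1)·I + μ·Q for a real number μ. Suppose i ≠ j are indices (both different from the first) with Q_{ij} = ω. With the path counts N_{x,y} := #{k : Q_{ik} = x and Q_{kj} = y} for x, y ∈ {1, ω, ω²}, and writing α = N_{ω,ω²}, β = N_{ω,ω}, γ = N_{ω,1}, a = N_{ω²,ω²}, b = N_{ω²,ω}, c = N_{ω²,1}, A = N_{1,ω²}, B = N_{1,ω}, C = N_{1,1}, the following equations hold (as equalities of real numbers): α − B = −(2μ+1)/3; β − C = −(2μ+4)/3; γ + B + C = n/3 + μ; a − C = −(μ+2)/3; b + B + C = (n + μ − 1)/3; c − B = (1 − μ)/3; A + B + C = (n + 2μ + 1)/3. -/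

import Mathlib

/-- `ω = (−1 + i√3)/2`, a primitive cube root of unity. -/
noncomputable def ω3 : ℂ := (-1 + Complex.I * Real.sqrt 3) / 2

/-- A cube root Seidel matrix: self-adjoint, zero diagonal, off-diagonal
entries among the cube roots of unity. -/
def IsCubeRootSeidel {n : ℕ} (Q : Matrix (Fin n) (Fin n) ℂ) : Prop :=
  Q.IsHermitian ∧ (∀ i, Q i i = 0) ∧
    ∀ i j, i ≠ j → Q i j = 1 ∨ Q i j = ω3 ∨ Q i j = ω3 ^ 2

/-- Standard form: every off-diagonal entry in the first row and first column
equals 1. -/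
def IsStandardForm {n : ℕ} (Q : Matrix (Fin n) (Fin n) ℂ) : Prop :=
  ∀ i j : Fin n, i ≠ j → (i.val = 0 ∨ j.val = 0) → Q i j = 1

/-- The path count `N_{x,y}(i,j) = #{k : Q_{ik} = x and Q_{kj} = y}`,
regarded as a real number. -/
noncomputable def pathCount {n : ℕ} (Q : Matrix (Fin n) (Fin n) ℂ)
    (i j : Fin n) (x y : ℂ) : ℝ :=
  (Nat.card {k : Fin n // Q i k = x ∧ Q k j = y} : ℝ)

lemma ω3_eq : ω3 = ((-1/2 : ℝ) : ℂ) + ((Real.sqrt 3 / 2 : ℝ) : ℂ) * Complex.I := by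
  unfold ω3; push_cast; ring

lemma sqrt3_sq : ((Real.sqrt 3 : ℝ) : ℂ) ^ 2 = 3 := by
  rw [← Complex.ofReal_pow, Real.sq_sqrt] <;> norm_num

lemma ω3_sum : ω3 ^ 2 + ω3 + 1 = 0 := by
  unfold ω3
  have h := sqrt3_sq
  field_simp
  linear_combination (((Real.sqrt 3 : ℝ) : ℂ) ^ 2) * Complex.I_sq - h

lemma ω3_sq_eq : ω3 ^ 2 = ((-1/2 : ℝ) : ℂ) + ((-(Real.sqrt 3 / 2) : ℝ) : ℂ) * Complex.I := by
  have h := sqrt3_sq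
  rw [ω3_eq]
  push_cast
  ring_nf
  rw [Complex.I_sq]
  linear_combination (-(1/4) : ℂ) * h

lemma ω3_indep (a b : ℝ) (h : (a : ℂ) + (b : ℂ) * ω3 = 0) : a = 0 ∧ b = 0 := by
  rw [ω3_eq] at h
  have hre := congrArg Complex.re h
  have him := congrArg Complex.im h
  simp [Complex.add_re, Complex.add_im, Complex.mul_re, Complex.mul_im] at hre him
  have hs : Real.sqrt 3 > 0 := by positivity
  constructor <;> nlinarith [him, hre]

lemma ω3_ne_one : ω3 ≠ 1 := by
  intro h
  have := congrArg Complex.im h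
  rw [ω3_eq] at this
  simp at this

lemma ω3_sq_ne_one : ω3 ^ 2 ≠ 1 := by
  intro h
  have := congrArg Complex.im h
  rw [ω3_sq_eq] at this
  simp at this

lemma ω3_ne_sq : ω3 ≠ ω3 ^ 2 := by
  intro h
  rw [ω3_sq_eq, ω3_eq] at h
  have := congrArg Complex.im h
  simp at this
  have h3 : Real.sqrt 3 > 0 := by positivity
  linarith

lemma ω3_ne_zero : ω3 ≠ 0 := by
  intro h
  have := congrArg Complex.im h
  rw [ω3_eq] at this
  simp at this

lemma ω3_sq_ne_zero : ω3 ^ 2 ≠ 0 := by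
  intro h
  have := congrArg Complex.im h
  rw [ω3_sq_eq] at this
  simp at this

lemma pathCount_mul {n : ℕ} (Q : Matrix (Fin n) (Fin n) ℂ) (i j : Fin n)
    (x y : ℂ) (c : ℂ) :
    ((pathCount Q i j x y : ℝ) : ℂ) * c
      = ∑ k : Fin n, if Q i k = x ∧ Q k j = y then c else 0 := by
  classical
  rw [Finset.sum_ite, Finset.sum_const, Finset.sum_const_zero, add_zero,
    pathCount, Nat.card_eq_fintype_card, Fintype.card_subtype, nsmul_eq_mul]
  push_cast
  rfl

lemma key_sum {n : ℕ} (Q : Matrix (Fin n) (Fin n) ℂ) (i j : Fin n)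
    (hdiag : ∀ k, Q k k = 0)
    (hent : ∀ a b : Fin n, a ≠ b → Q a b = 1 ∨ Q a b = ω3 ∨ Q a b = ω3 ^ 2)
    (hij : i ≠ j) (f : ℂ → ℂ → ℂ) :
    ∑ k : Fin n, f (Q i k) (Q k j)
      = ((pathCount Q i j 1 1 : ℝ) : ℂ) * f 1 1
        + ((pathCount Q i j 1 ω3 : ℝ) : ℂ) * f 1 ω3
        + ((pathCount Q i j 1 (ω3 ^ 2) : ℝ) : ℂ) * f 1 (ω3 ^ 2)
        + ((pathCount Q i j ω3 1 : ℝ) : ℂ) * f ω3 1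
        + ((pathCount Q i j ω3 ω3 : ℝ) : ℂ) * f ω3 ω3
        + ((pathCount Q i j ω3 (ω3 ^ 2) : ℝ) : ℂ) * f ω3 (ω3 ^ 2)
        + ((pathCount Q i j (ω3 ^ 2) 1 : ℝ) : ℂ) * f (ω3 ^ 2) 1
        + ((pathCount Q i j (ω3 ^ 2) ω3 : ℝ) : ℂ) * f (ω3 ^ 2) ω3
        + ((pathCount Q i j (ω3 ^ 2) (ω3 ^ 2) : ℝ) : ℂ) * f (ω3 ^ 2) (ω3 ^ 2)
        + f 0 (Q i j) + f (Q i j) 0 := by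
  classical
  have key : ∀ k : Fin n, f (Q i k) (Q k j)
      = (if Q i k = 1 ∧ Q k j = 1 then f 1 1 else 0)
        + (if Q i k = 1 ∧ Q k j = ω3 then f 1 ω3 else 0)
        + (if Q i k = 1 ∧ Q k j = ω3 ^ 2 then f 1 (ω3 ^ 2) else 0)
        + (if Q i k = ω3 ∧ Q k j = 1 then f ω3 1 else 0)
        + (if Q i k = ω3 ∧ Q k j = ω3 then f ω3 ω3 else 0)
        + (if Q i k = ω3 ∧ Q k j = ω3 ^ 2 then f ω3 (ω3 ^ 2) else 0)
        + (if Q i k = ω3 ^ 2 ∧ Q k j = 1 then f (ω3 ^ 2) 1 else 0)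
        + (if Q i k = ω3 ^ 2 ∧ Q k j = ω3 then f (ω3 ^ 2) ω3 else 0)
        + (if Q i k = ω3 ^ 2 ∧ Q k j = ω3 ^ 2 then f (ω3 ^ 2) (ω3 ^ 2) else 0)
        + (if k = i then f 0 (Q i j) else 0)
        + (if k = j then f (Q i j) 0 else 0) := by
    intro k
    have d1 : ω3 ≠ 1 := ω3_ne_one
    have d2 : ω3 ^ 2 ≠ 1 := ω3_sq_ne_one
    have d3 : ω3 ≠ ω3 ^ 2 := ω3_ne_sq
    have d4 : ω3 ≠ 0 := ω3_ne_zero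
    have d5 : ω3 ^ 2 ≠ 0 := ω3_sq_ne_zero
    by_cases hki : k = i
    · subst hki
      have hne : k ≠ j := hij
      simp [hdiag, hne, d4, d5, d4.symm, d5.symm]
    · by_cases hkj : k = j
      · subst hkj
        simp [hdiag, hki, d4, d5, d4.symm, d5.symm]
      · rcases hent i k (fun h => hki h.symm) with h | h | h <;>
          rcases hent k j hkj with h' | h' | h' <;>
          simp [h, h', hki, hkj, d1, d2, d3, d1.symm, d2.symm, d3.symm]
  calc ∑ k : Fin n, f (Q i k) (Q k j) = _ := Finset.sum_congr rfl (fun k _ => key k)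
    _ = _ := by
      simp only [Finset.sum_add_distrib, Finset.sum_ite_eq' Finset.univ,
        Finset.mem_univ, if_true]
      rw [← pathCount_mul, ← pathCount_mul, ← pathCount_mul, ← pathCount_mul,
        ← pathCount_mul, ← pathCount_mul, ← pathCount_mul, ← pathCount_mul,
        ← pathCount_mul]

theorem cubeRootSeidel_omega_entry_equations
    (n : ℕ) (Q : Matrix (Fin n) (Fin n) ℂ) (μ : ℝ)
    (hQ : IsCubeRootSeidel Q) (hsf : IsStandardForm Q)
    (heq : Q ^ 2 = ((n : ℂ) - 1) • (1 : Matrix (Fin n) (Fin n) ℂ) + (μ : ℂ) • Q)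
    (i j : Fin n) (hij : i ≠ j) (hi : i.val ≠ 0) (hj : j.val ≠ 0)
    (hω : Q i j = ω3) :
    pathCount Q i j ω3 (ω3 ^ 2) - pathCount Q i j 1 ω3 = -(2 * μ + 1) / 3 ∧
    pathCount Q i j ω3 ω3 - pathCount Q i j 1 1 = -(2 * μ + 4) / 3 ∧
    pathCount Q i j ω3 1 + pathCount Q i j 1 ω3 + pathCount Q i j 1 1 = (n : ℝ) / 3 + μ ∧
    pathCount Q i j (ω3 ^ 2) (ω3 ^ 2) - pathCount Q i j 1 1 = -(μ + 2) / 3 ∧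
    pathCount Q i j (ω3 ^ 2) ω3 + pathCount Q i j 1 ω3 + pathCount Q i j 1 1
      = ((n : ℝ) + μ - 1) / 3 ∧
    pathCount Q i j (ω3 ^ 2) 1 - pathCount Q i j 1 ω3 = (1 - μ) / 3 ∧
    pathCount Q i j 1 (ω3 ^ 2) + pathCount Q i j 1 ω3 + pathCount Q i j 1 1
      = ((n : ℝ) + 2 * μ + 1) / 3 := by
  classical
  obtain ⟨hherm, hdiag, hent⟩ := hQ
  have hn : 0 < n := i.pos
  set z : Fin n := ⟨0, hn⟩ with hzdef
  have hiz : i ≠ z := fun h => hi (by rw [h])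
  have hjz : j ≠ z := fun h => hj (by rw [h])
  have hQiz : Q i z = 1 := hsf i z hiz (Or.inr rfl)
  have hQzj : Q z j = 1 := hsf z j (fun h => hjz h.symm) (Or.inl rfl)
  have h2 : ∀ a b : Fin n, a ≠ b → ∑ k, Q a k * Q k b = (μ : ℂ) * Q a b := by
    intro a b hab
    have h := congrFun (congrFun heq a) b
    rw [pow_two, Matrix.mul_apply] at h
    simpa [Matrix.add_apply, Matrix.smul_apply, Matrix.one_apply_ne hab,
      smul_eq_mul] using h
  have hrow : ∑ k, Q i k = (μ : ℂ) + 1 := by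
    have hz1 : ∑ k, (Q i k - Q i k * Q k z) = 1 := by
      rw [Finset.sum_eq_single z]
      · rw [hdiag, hQiz]; ring
      · intro b _ hb
        rw [hsf b z hb (Or.inr rfl)]; ring
      · intro h; exact absurd (Finset.mem_univ z) h
    have h0 := h2 i z hiz
    rw [Finset.sum_sub_distrib] at hz1
    rw [hQiz, mul_one] at h0
    linear_combination hz1 + h0
  have hcol : ∑ k, Q k j = (μ : ℂ) + 1 := by
    have hz1 : ∑ k, (Q k j - Q z k * Q k j) = 1 := by
      rw [Finset.sum_eq_single z]
      · rw [hdiag, hQzj]; ring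
      · intro b _ hb
        rw [hsf z b (fun h => hb h.symm) (Or.inl rfl)]
        ring
      · intro h; exact absurd (Finset.mem_univ z) h
    have h0 := h2 z j (fun h => hjz h.symm)
    rw [Finset.sum_sub_distrib] at hz1
    rw [hQzj, mul_one] at h0
    linear_combination hz1 + h0
  have hE2 : ∑ k, Q i k * Q k j = (μ : ℂ) * ω3 := by
    rw [← hω]; exact h2 i j hij
  have E2 := key_sum Q i j hdiag hent hij (fun x y => x * y)
  have E3 := key_sum Q i j hdiag hent hij (fun x y => x)
  have E4 := key_sum Q i j hdiag hent hij (fun x y => y)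
  have E1 := key_sum Q i j hdiag hent hij (fun _ _ => 1)
  simp only [hω] at E2 E3 E4 E1
  have hsum1 : ∑ _k : Fin n, (1 : ℂ) = (n : ℂ) := by simp
  -- names for the nine counts
  set C := pathCount Q i j 1 1 with hC
  set B := pathCount Q i j 1 ω3 with hB
  set A := pathCount Q i j 1 (ω3 ^ 2) with hA
  set γ := pathCount Q i j ω3 1 with hγ
  set β := pathCount Q i j ω3 ω3 with hβ
  set α := pathCount Q i j ω3 (ω3 ^ 2) with hα
  set c := pathCount Q i j (ω3 ^ 2) 1 with hc
  set b := pathCount Q i j (ω3 ^ 2) ω3 with hb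
  set a := pathCount Q i j (ω3 ^ 2) (ω3 ^ 2) with ha
  have E2' := hE2.symm.trans E2
  have E3' := hrow.symm.trans E3
  have E4' := hcol.symm.trans E4
  have E1' := hsum1.symm.trans E1
  have g1 : ((α + β + γ + a + b + c + A + B + C - ((n : ℝ) - 2) : ℝ) : ℂ)
      + ((0 : ℝ) : ℂ) * ω3 = 0 := by
    push_cast
    linear_combination -E1'
  have g2 : ((α + b + C - β - c - A : ℝ) : ℂ)
      + ((γ + a + B - β - c - A - μ : ℝ) : ℂ) * ω3 = 0 := by
    push_cast
    linear_combination -E2' - ((a : ℂ) * ω3 ^ 2 + ((α : ℂ) + b - a) * ω3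
      + ((A : ℂ) + β + c - α - b)) * ω3_sum
  have g3 : ((A + B + C - a - b - c - μ - 1 : ℝ) : ℂ)
      + ((α + β + γ - a - b - c + 1 : ℝ) : ℂ) * ω3 = 0 := by
    push_cast
    linear_combination -E3' - ((a : ℂ) + b + c) * ω3_sum
  have g4 : ((γ + c + C - α - a - A - μ - 1 : ℝ) : ℂ)
      + ((β + b + B - α - a - A + 1 : ℝ) : ℂ) * ω3 = 0 := by
    push_cast
    linear_combination -E4' - ((A : ℂ) + α + a) * ω3_sum
  obtain ⟨e1, -⟩ := ω3_indep _ _ g1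
  obtain ⟨e2X, e2Y⟩ := ω3_indep _ _ g2
  obtain ⟨e3X, e3Y⟩ := ω3_indep _ _ g3
  obtain ⟨e4X, e4Y⟩ := ω3_indep _ _ g4
  refine ⟨?_, ?_, ?_, ?_, ?_, ?_, ?_⟩ <;> linarith
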